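/- Let L act on trigonometric Fourier modes by the Taylor-Green linearization. With φ_{j1,j2}(x) = (1/(√2 π)) cos(j1 x1 + j2 x2), one has L φ_{j1,j2} = α(φ_{j1+1,j2+1} - φ_{j1-1,j2-1}) + β(-φ_{j1+1,j2-1} + φ_{j1-1,j2+1}) where α = (j1-j2)(j1²+j2²-2)/(4(j1²+j2²)) and β = (j1+j2)(j1²+j2²-2)/(4(j1²+j2²)), for (j1,j2) ≠ (0,0). -/
import Mathlib


open Real

/-- The linearized Euler operator about the Taylor-Green vortex, applied pointwise to a
scalar field `w` whose stream function (`Δ⁻¹ w`) is `ψw`: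
`L w = -(u_s·∇)w - (∇⊥ψw)·∇ω_s`, with `u_s = (-cos x₁ sin x₂, sin x₁ cos x₂)` and
`ω_s = 2 cos x₁ cos x₂`. -/
noncomputable def TGLin (w ψw : ℝ → ℝ → ℝ) (x1 x2 : ℝ) : ℝ :=
  -((-Real.cos x1 * Real.sin x2) * deriv (fun y : ℝ => w y x2) x1
      + (Real.sin x1 * Real.cos x2) * deriv (fun y : ℝ => w x1 y) x2)
    - ((-(deriv (fun y : ℝ => ψw x1 y) x2))
          * deriv (fun y : ℝ => 2 * Real.cos y * Real.cos x2) x1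
        + (deriv (fun y : ℝ => ψw y x2) x1)
          * deriv (fun y : ℝ => 2 * Real.cos x1 * Real.cos y) x2)

/-- The normalized Fourier cosine mode `φ_{j₁,j₂}(x) = (1/(√2 π)) cos(j₁x₁ + j₂x₂)`. -/
noncomputable def fourierMode (j1 j2 : ℤ) (x1 x2 : ℝ) : ℝ :=
  (1 / (Real.sqrt 2 * π)) * Real.cos ((j1 : ℝ) * x1 + (j2 : ℝ) * x2)

/-- Action of the Taylor-Green linearized Euler operator on Fourier modes:
`L φ_{j₁,j₂} = α(φ_{j₁+1,j₂+1} - φ_{j₁-1,j₂-1}) + β(-φ_{j₁+1,j₂-1} + φ_{j₁-1,j₂+1})`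
with `α = (j₁-j₂)(j₁²+j₂²-2)/(4(j₁²+j₂²))` and `β = (j₁+j₂)(j₁²+j₂²-2)/(4(j₁²+j₂²))`,
for `(j₁,j₂) ≠ (0,0)`; here `Δ⁻¹ φ_{j₁,j₂} = -(j₁²+j₂²)⁻¹ φ_{j₁,j₂}`. -/

lemma deriv_cmul_cos (c a b : ℝ) (x : ℝ) :
    deriv (fun y : ℝ => c * Real.cos (a * y + b)) x = -(c * a) * Real.sin (a * x + b) := by
  have h : HasDerivAt (fun y : ℝ => a * y + b) a x := by
    simpa using ((hasDerivAt_id x).const_mul a).add_const b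
  have := (h.cos.const_mul c).deriv
  rw [this]; ring

lemma deriv_cmul_cos' (c a b : ℝ) (x : ℝ) :
    deriv (fun y : ℝ => c * Real.cos (b + a * y)) x = -(c * a) * Real.sin (b + a * x) := by
  have h : HasDerivAt (fun y : ℝ => b + a * y) a x := by
    simpa using (((hasDerivAt_id x).const_mul a).const_add b)
  have := (h.cos.const_mul c).deriv
  rw [this]; ring

lemma deriv_tg1 (x2 x : ℝ) :
    deriv (fun y : ℝ => 2 * Real.cos y * Real.cos x2) x = -2 * Real.sin x * Real.cos x2 := by
  have h := ((Real.hasDerivAt_cos x).const_mul 2).mul_const (Real.cos x2)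
  rw [h.deriv]; ring

lemma deriv_tg2 (x1 x : ℝ) :
    deriv (fun y : ℝ => 2 * Real.cos x1 * Real.cos y) x = -(2 * Real.cos x1 * Real.sin x) := by
  have h := (Real.hasDerivAt_cos x).const_mul (2 * Real.cos x1)
  rw [h.deriv]; ring

theorem TGLin_fourierMode (j1 j2 : ℤ) (hj : (j1, j2) ≠ (0, 0)) :
    ∀ x1 x2 : ℝ,
      TGLin (fourierMode j1 j2)
        (fun a b => -(1 / ((j1 : ℝ) ^ 2 + (j2 : ℝ) ^ 2)) * fourierMode j1 j2 a b)
        x1 x2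
      = (((j1 : ℝ) - j2) * ((j1 : ℝ) ^ 2 + (j2 : ℝ) ^ 2 - 2)
            / (4 * ((j1 : ℝ) ^ 2 + (j2 : ℝ) ^ 2)))
          * (fourierMode (j1 + 1) (j2 + 1) x1 x2 - fourierMode (j1 - 1) (j2 - 1) x1 x2)
        + (((j1 : ℝ) + j2) * ((j1 : ℝ) ^ 2 + (j2 : ℝ) ^ 2 - 2)
            / (4 * ((j1 : ℝ) ^ 2 + (j2 : ℝ) ^ 2)))
          * (-fourierMode (j1 + 1) (j2 - 1) x1 x2
              + fourierMode (j1 - 1) (j2 + 1) x1 x2) := by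
  intro x1 x2
  have hc : (j1 : ℝ) ^ 2 + (j2 : ℝ) ^ 2 ≠ 0 := by
    have h : j1 ≠ 0 ∨ j2 ≠ 0 := by
      by_contra h; push_neg at h; exact hj (by simp [h.1, h.2])
    rcases h with h | h
    · have : (j1 : ℝ) ≠ 0 := Int.cast_ne_zero.mpr h
      positivity
    · have : (j2 : ℝ) ≠ 0 := Int.cast_ne_zero.mpr h
      positivity
  unfold TGLin fourierMode
  have e1 : (fun y : ℝ => 1 / (Real.sqrt 2 * π) * Real.cos ((j1:ℝ) * y + (j2:ℝ) * x2))
      = fun y : ℝ => (1 / (Real.sqrt 2 * π)) * Real.cos ((j1:ℝ) * y + (j2:ℝ) * x2) := rfl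
  rw [show (fun y : ℝ => 1 / (Real.sqrt 2 * π) * Real.cos ((j1:ℝ) * x1 + (j2:ℝ) * y))
      = (fun y : ℝ => (1 / (Real.sqrt 2 * π)) * Real.cos ((j1:ℝ) * x1 + (j2:ℝ) * y)) from rfl]
  rw [deriv_cmul_cos, deriv_cmul_cos', deriv_tg1, deriv_tg2]
  rw [show (fun y : ℝ => -(1 / ((j1:ℝ) ^ 2 + (j2:ℝ) ^ 2)) *
        (1 / (Real.sqrt 2 * π) * Real.cos ((j1:ℝ) * y + (j2:ℝ) * x2)))
      = (fun y : ℝ => (-(1 / ((j1:ℝ) ^ 2 + (j2:ℝ) ^ 2)) * (1 / (Real.sqrt 2 * π))) *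
          Real.cos ((j1:ℝ) * y + (j2:ℝ) * x2)) from by funext y; ring]
  rw [show (fun y : ℝ => -(1 / ((j1:ℝ) ^ 2 + (j2:ℝ) ^ 2)) *
        (1 / (Real.sqrt 2 * π) * Real.cos ((j1:ℝ) * x1 + (j2:ℝ) * y)))
      = (fun y : ℝ => (-(1 / ((j1:ℝ) ^ 2 + (j2:ℝ) ^ 2)) * (1 / (Real.sqrt 2 * π))) *
          Real.cos ((j1:ℝ) * x1 + (j2:ℝ) * y)) from by funext y; ring]
  rw [deriv_cmul_cos, deriv_cmul_cos']
  push_cast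
  have expand : ∀ a b : ℝ,
      Real.cos (((j1:ℝ) + a) * x1 + ((j2:ℝ) + b) * x2)
      = Real.cos ((j1:ℝ) * x1 + (j2:ℝ) * x2) * Real.cos (a * x1 + b * x2)
        - Real.sin ((j1:ℝ) * x1 + (j2:ℝ) * x2) * Real.sin (a * x1 + b * x2) := by
    intro a b
    rw [show ((j1:ℝ) + a) * x1 + ((j2:ℝ) + b) * x2
        = ((j1:ℝ) * x1 + (j2:ℝ) * x2) + (a * x1 + b * x2) from by ring, Real.cos_add]
  rw [show ((j1:ℝ) - 1) * x1 + ((j2:ℝ) - 1) * x2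
      = ((j1:ℝ) + (-1)) * x1 + ((j2:ℝ) + (-1)) * x2 from by ring]
  rw [show ((j1:ℝ) + 1) * x1 + ((j2:ℝ) - 1) * x2
      = ((j1:ℝ) + 1) * x1 + ((j2:ℝ) + (-1)) * x2 from by ring]
  rw [show ((j1:ℝ) - 1) * x1 + ((j2:ℝ) + 1) * x2
      = ((j1:ℝ) + (-1)) * x1 + ((j2:ℝ) + 1) * x2 from by ring]
  rw [expand 1 1, expand (-1) (-1), expand 1 (-1), expand (-1) 1]
  simp only [neg_mul, one_mul, neg_neg, Real.cos_add, Real.sin_add, Real.cos_neg, Real.sin_neg]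
  field_simp
  ring
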